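/- Let Γ be a finite simple graph with vertex set V = {1, …, n}, let X be a 4-clique of Γ, and let H be the subgroup of P_Γ generated by the six elements {a_{ij} : i < j, {i,j} ⊆ X}. If g ∈ P_Γ commutes with at least five of the six elements a_{ij}, {i,j} ⊆ X, then g commutes with every element of the commutator subgroup [H, H]. -/

import Mathlib

abbrev PBIdx (n : ℕ) : Type := {p : Fin n × Fin n // p.1 < p.2}

namespace GraphicBraid

open scoped commutatorElement

def ofIdx {n : ℕ} {i j : Fin n} (h : i < j) : FreeGroup (PBIdx n) :=
  FreeGroup.of ⟨(i, j), h⟩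

/-- The Artin relators for the pure braid group `P_n`. -/
def pureBraidRels (n : ℕ) : Set (FreeGroup (PBIdx n)) :=
  {w | ∃ (i j r s : Fin n) (hij : i < j) (hrs : r < s),
      (s < i ∨ (i < r ∧ s < j)) ∧ w = ⁅ofIdx hij, ofIdx hrs⁆} ∪
  {w | ∃ (r i s j : Fin n) (hri : r < i) (his : i < s) (hsj : s < j),
      w = ⁅ofIdx (his.trans hsj), ofIdx hsj * ofIdx (hri.trans his) * (ofIdx hsj)⁻¹⁆} ∪
  {w | ∃ (i j r : Fin n) (hij : i < j) (hjr : j < r),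
      w = ⁅ofIdx hij * ofIdx (hij.trans hjr), ofIdx hjr⁆ ∨
      w = ⁅ofIdx hij, ofIdx (hij.trans hjr) * ofIdx hjr⁆}

/-- Relators killing the generators corresponding to non-edges of `Γ`. -/
def nonEdgeRels {n : ℕ} (Γ : SimpleGraph (Fin n)) : Set (FreeGroup (PBIdx n)) :=
  {w | ∃ p : PBIdx n, ¬ Γ.Adj p.1.1 p.1.2 ∧ w = FreeGroup.of p}

def graphicRels {n : ℕ} (Γ : SimpleGraph (Fin n)) : Set (FreeGroup (PBIdx n)) :=
  pureBraidRels n ∪ nonEdgeRels Γ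

/-- The graphic pure braid group `P_Γ`. -/
abbrev GPB {n : ℕ} (Γ : SimpleGraph (Fin n)) : Type := PresentedGroup (graphicRels Γ)

/-- The image of the Artin generator `a_{ij}` in `P_Γ`. -/
def agen {n : ℕ} (Γ : SimpleGraph (Fin n)) {i j : Fin n} (h : i < j) : GPB Γ :=
  PresentedGroup.of (rels := graphicRels Γ) ⟨(i, j), h⟩

/-- Relators killing the generators `a_{ij}` with `{i,j} ⊄ X`. -/
def killRels {n : ℕ} (X : Set (Fin n)) : Set (FreeGroup (PBIdx n)) :=
  {w | ∃ p : PBIdx n, ¬ (p.1.1 ∈ X ∧ p.1.2 ∈ X) ∧ w = FreeGroup.of p}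

/-- The quotient `P_X` of `P_Γ` obtained by killing all generators `a_{ij}` with `{i,j} ⊄ X`. -/
abbrev GPBX {n : ℕ} (Γ : SimpleGraph (Fin n)) (X : Set (Fin n)) : Type :=
  PresentedGroup (graphicRels Γ ∪ killRels X)

/-- The canonical surjection between presented groups when the set of relators grows. -/
def quotMap {α : Type*} {R S : Set (FreeGroup α)} (h : R ⊆ S) :
    PresentedGroup R →* PresentedGroup S :=
  QuotientGroup.map _ _ (MonoidHom.id _)
    (fun _ hx => Subgroup.normalClosure_mono h hx)

/-- The quotient map `ρ_X : P_Γ → P_X`. -/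
def rho {n : ℕ} (Γ : SimpleGraph (Fin n)) (X : Set (Fin n)) : GPB Γ →* GPBX Γ X :=
  quotMap Set.subset_union_left

lemma killRels_anti {n : ℕ} {X Y : Set (Fin n)} (h : X ⊆ Y) : killRels Y ⊆ killRels X := by
  rintro w ⟨p, hp, rfl⟩
  exact ⟨p, fun hx => hp ⟨h hx.1, h hx.2⟩, rfl⟩

/-- The quotient map `P_Y → P_X` for `X ⊆ Y`. -/
def rhoDown {n : ℕ} (Γ : SimpleGraph (Fin n)) {X Y : Set (Fin n)} (h : X ⊆ Y) :
    GPBX Γ Y →* GPBX Γ X :=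
  quotMap (Set.union_subset_union_right _ (killRels_anti h))

/-- `X` is a maximal clique of `Γ`. -/
def MaxClique {n : ℕ} (Γ : SimpleGraph (Fin n)) (X : Set (Fin n)) : Prop :=
  Γ.IsClique X ∧ ∀ Y : Set (Fin n), Γ.IsClique Y → X ⊆ Y → Y = X


/-- The subgroup of `P_Γ` generated by the generators `a_{ij}` with `{i,j} ⊆ X`. -/
def cliqueSubgroup {n : ℕ} (Γ : SimpleGraph (Fin n)) (X : Set (Fin n)) : Subgroup (GPB Γ) :=
  Subgroup.closure {g : GPB Γ | ∃ p : PBIdx n, (p.1.1 ∈ X ∧ p.1.2 ∈ X) ∧ g = PresentedGroup.of p}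

/-- The bipartite incidence graph of edges and 3-cliques (triangles) of `Γ`. -/
def incidenceGraph {n : ℕ} (Γ : SimpleGraph (Fin n)) :
    SimpleGraph (Γ.edgeSet ⊕ {T : Finset (Fin n) // Γ.IsNClique 3 T}) where
  Adj x y :=
    match x, y with
    | Sum.inl e, Sum.inr T => ∀ v : Fin n, v ∈ (e : Sym2 (Fin n)) → v ∈ T.1
    | Sum.inr T, Sum.inl e => ∀ v : Fin n, v ∈ (e : Sym2 (Fin n)) → v ∈ T.1
    | _, _ => False
  symm := ⟨by rintro (e | T) (f | S) h <;> exact h⟩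
  loopless := ⟨by rintro (e | T) h <;> exact h⟩

end GraphicBraid

section Abstract
variable {G : Type*} [Group G]
open scoped commutatorElement

lemma comm_closure {g : G} {S : Set G} (h : ∀ x ∈ S, Commute g x) :
    ∀ x ∈ Subgroup.closure S, Commute g x := fun _ hx =>
  Subgroup.closure_induction (fun y hy => h y hy) (Commute.one_right g)
    (fun _ _ _ _ h1 h2 => h1.mul_right h2) (fun _ _ h1 => h1.inv_right) hx

lemma five_step (g D : G) (S5 S6 : Set G) (h56 : S5 ⊆ S6)
    (hD : ∀ x ∈ S6, Commute D x) (hg : ∀ x ∈ S5, Commute g x)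
    (hgen : ∀ x ∈ S6, ∃ u ∈ Subgroup.closure S5, ∃ v ∈ Subgroup.closure S5, ∃ m : ℤ,
      x = u * D ^ m * v) :
    ∀ x ∈ ⁅Subgroup.closure S6, Subgroup.closure S6⁆, Commute g x := by
  have hDH : ∀ h ∈ Subgroup.closure S6, Commute D h := comm_closure hD
  have hgC : ∀ u ∈ Subgroup.closure S5, Commute g u := comm_closure hg
  have h5le : Subgroup.closure S5 ≤ Subgroup.closure S6 := Subgroup.closure_mono h56
  have decomp : ∀ h ∈ Subgroup.closure S6,
      ∃ u ∈ Subgroup.closure S5, ∃ m : ℤ, h = u * D ^ m := by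
    intro h hh
    refine Subgroup.closure_induction ?_ ⟨1, one_mem _, 0, by simp⟩ ?_ ?_ hh
    · rintro x hx
      obtain ⟨u, hu, v, hv, m, rfl⟩ := hgen x hx
      have hc : Commute (D ^ m) v := (hDH v (h5le hv)).zpow_left m
      refine ⟨u * v, mul_mem hu hv, m, ?_⟩
      calc u * D ^ m * v = u * (D ^ m * v) := by group
        _ = u * (v * D ^ m) := by rw [hc.eq]
        _ = u * v * D ^ m := by group
    · rintro x y _ _ ⟨u₁, hu₁, m₁, rfl⟩ ⟨u₂, hu₂, m₂, rfl⟩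
      have hc : Commute (D ^ m₁) u₂ := (hDH u₂ (h5le hu₂)).zpow_left m₁
      refine ⟨u₁ * u₂, mul_mem hu₁ hu₂, m₁ + m₂, ?_⟩
      rw [zpow_add]
      calc u₁ * D ^ m₁ * (u₂ * D ^ m₂) = u₁ * (D ^ m₁ * u₂) * D ^ m₂ := by group
        _ = u₁ * (u₂ * D ^ m₁) * D ^ m₂ := by rw [hc.eq]
        _ = u₁ * u₂ * (D ^ m₁ * D ^ m₂) := by group
    · rintro x _ ⟨u, hu, m, rfl⟩
      have hc : Commute (D ^ m) u := (hDH u (h5le hu)).zpow_left m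
      refine ⟨u⁻¹, inv_mem hu, -m, ?_⟩
      rw [zpow_neg, mul_inv_rev, (hc.inv_left.inv_right).eq]
  intro x hx
  rw [Subgroup.commutator_def] at hx
  refine Subgroup.closure_induction ?_ (Commute.one_right g)
    (fun _ _ _ _ h1 h2 => h1.mul_right h2) (fun _ _ h1 => h1.inv_right) hx
  rintro w ⟨p, hp, q, hq, rfl⟩
  obtain ⟨u₁, hu₁, m₁, rfl⟩ := decomp p hp
  obtain ⟨u₂, hu₂, m₂, rfl⟩ := decomp q hq
  have c1 : Commute (D ^ m₁) u₁ := (hDH u₁ (h5le hu₁)).zpow_left m₁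
  have c2 : Commute (D ^ m₁) u₂ := (hDH u₂ (h5le hu₂)).zpow_left m₁
  have c3 : Commute (D ^ m₂) u₁ := (hDH u₁ (h5le hu₁)).zpow_left m₂
  have c5 : Commute (D ^ m₁) (D ^ m₂) := (Commute.refl D).zpow_zpow m₁ m₂
  have key : ⁅u₁ * D ^ m₁, u₂ * D ^ m₂⁆ = ⁅u₁, u₂⁆ := by
    simp only [commutatorElement_def, mul_inv_rev]
    calc u₁ * D ^ m₁ * (u₂ * D ^ m₂) * ((D ^ m₁)⁻¹ * u₁⁻¹) * ((D ^ m₂)⁻¹ * u₂⁻¹)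
        = u₁ * (D ^ m₁ * u₂) * (D ^ m₂ * ((D ^ m₁)⁻¹ * (u₁⁻¹ * ((D ^ m₂)⁻¹ * u₂⁻¹)))) := by
          group
      _ = u₁ * (u₂ * D ^ m₁) * (D ^ m₂ * ((D ^ m₁)⁻¹ * (u₁⁻¹ * ((D ^ m₂)⁻¹ * u₂⁻¹)))) := by
          rw [c2.eq]
      _ = u₁ * u₂ * ((D ^ m₁ * D ^ m₂) * (D ^ m₁)⁻¹ * (u₁⁻¹ * ((D ^ m₂)⁻¹ * u₂⁻¹))) := by
          group
      _ = u₁ * u₂ * ((D ^ m₂ * D ^ m₁) * (D ^ m₁)⁻¹ * (u₁⁻¹ * ((D ^ m₂)⁻¹ * u₂⁻¹))) := by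
          rw [c5.eq]
      _ = u₁ * u₂ * ((D ^ m₂ * u₁⁻¹) * ((D ^ m₂)⁻¹ * u₂⁻¹)) := by group
      _ = u₁ * u₂ * ((u₁⁻¹ * D ^ m₂) * ((D ^ m₂)⁻¹ * u₂⁻¹)) := by rw [c3.inv_right.eq]
      _ = u₁ * u₂ * u₁⁻¹ * u₂⁻¹ := by group
  rw [key, commutatorElement_def]
  have h1 := hgC u₁ hu₁
  have h2 := hgC u₂ hu₂
  exact ((h1.mul_right h2).mul_right h1.inv_right).mul_right h2.inv_right

lemma delta_comm (a b c d e f : G)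
    (R1 : Commute f a) (R2 : Commute d c) (R3 : Commute e (f*b*f⁻¹))
    (R4 : Commute (a*b) c) (R5 : Commute a (b*c))
    (R6 : Commute (a*d) e) (R7 : Commute a (d*e))
    (R8 : Commute (b*d) f) (R9 : Commute b (d*f))
    (R10 : Commute (c*e) f) (R11 : Commute c (e*f)) :
    ∀ x ∈ ({a,b,c,d,e,f} : Set G), Commute ((a*b*c)*(d*e*f)) x := by
  have hdt : d*(f*b*f⁻¹) = b*d := by
    calc d*(f*b*f⁻¹) = ((d*f)*b)*f⁻¹ := by group
      _ = (b*(d*f))*f⁻¹ := by rw [← R9.eq]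
      _ = b*d := by group
  have ht2 : d⁻¹*(b*d) = f*b*f⁻¹ := by rw [← hdt]; group
  have hAa : Commute (d*e*f) a := R7.symm.mul_left R1
  have hAc : Commute (d*e*f) c := by
    have h : Commute (d*(e*f)) c := R2.mul_left R11.symm
    rwa [← mul_assoc] at h
  have hAb : Commute (d*e*f) b := by
    show (d*e*f)*b = b*(d*e*f)
    calc (d*e*f)*b = (d*(e*(f*b*f⁻¹)))*f := by group
      _ = (d*((f*b*f⁻¹)*e))*f := by rw [R3.eq]
      _ = (d*(f*b*f⁻¹))*(e*f) := by group
      _ = (b*d)*(e*f) := by rw [hdt]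
      _ = b*(d*e*f) := by group
  have hp3a : Commute (a*b*c) a := by
    have h : Commute (a*(b*c)) a := (Commute.refl a).mul_left R5.symm
    rwa [← mul_assoc] at h
  have hp3c : Commute (a*b*c) c := R4.mul_left (Commute.refl c)
  have hp3b : Commute (a*b*c) b := by
    have h := (hp3a.inv_right).mul_right ((Commute.refl (a*b*c)).mul_right hp3c.inv_right)
    rwa [show a⁻¹*((a*b*c)*c⁻¹) = b from by group] at h
  have hAp3 : Commute (d*e*f) (a*b*c) := (hAa.mul_right hAb).mul_right hAc
  have hDa : Commute ((a*b*c)*(d*e*f)) a := hp3a.mul_left hAa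
  have hDb : Commute ((a*b*c)*(d*e*f)) b := hp3b.mul_left hAb
  have hDc : Commute ((a*b*c)*(d*e*f)) c := hp3c.mul_left hAc
  have hDA : Commute ((a*b*c)*(d*e*f)) (d*e*f) :=
    hAp3.symm.mul_left (Commute.refl (d*e*f))
  have key : (a*b*c)*(d*e*f) = ((a*b)*d)*(c*(e*f)) := by
    calc (a*b*c)*(d*e*f) = (a*b)*((c*d)*(e*f)) := by group
      _ = (a*b)*((d*c)*(e*f)) := by rw [← R2.eq]
      _ = ((a*b)*d)*(c*(e*f)) := by group
  have habd_f : Commute ((a*b)*d) f := by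
    have h : Commute (a*(b*d)) f := R1.symm.mul_left R8
    rwa [← mul_assoc] at h
  have hp4f : Commute (c*(e*f)) f := by
    have h : Commute ((c*e)*f) f := R10.mul_left (Commute.refl f)
    rwa [mul_assoc] at h
  have hp4c : Commute (c*(e*f)) c := (Commute.refl c).mul_left R11.symm
  have hp4e : Commute (c*(e*f)) e := by
    have h := (hp4c.inv_right).mul_right ((Commute.refl (c*(e*f))).mul_right hp4f.inv_right)
    rwa [show c⁻¹*((c*(e*f))*f⁻¹) = e from by group] at h
  have hDf : Commute ((a*b*c)*(d*e*f)) f := by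
    rw [key]; exact habd_f.mul_left hp4f
  have habd_e : Commute ((a*b)*d) e := by
    have h : e*((a*b)*d) = ((a*b)*d)*e := by
      calc e*((a*b)*d) = (e*(a*d))*(d⁻¹*(b*d)) := by group
        _ = ((a*d)*e)*(d⁻¹*(b*d)) := by rw [← R6.eq]
        _ = ((a*d)*e)*(f*b*f⁻¹) := by rw [ht2]
        _ = (a*d)*(e*(f*b*f⁻¹)) := by group
        _ = (a*d)*((f*b*f⁻¹)*e) := by rw [R3.eq]
        _ = (a*(d*(f*b*f⁻¹)))*e := by group
        _ = (a*(b*d))*e := by rw [hdt]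
        _ = ((a*b)*d)*e := by group
    exact h.symm
  have hDe : Commute ((a*b*c)*(d*e*f)) e := by
    rw [key]; exact habd_e.mul_left hp4e
  have hDde : Commute ((a*b*c)*(d*e*f)) (d*e) := by
    have h := hDA.mul_right hDf.inv_right
    rwa [show (d*e*f)*f⁻¹ = d*e from by group] at h
  have hDd : Commute ((a*b*c)*(d*e*f)) d := by
    have h := hDde.mul_right hDe.inv_right
    rwa [show (d*e)*e⁻¹ = d from by group] at h
  rintro x (rfl | rfl | rfl | rfl | rfl | rfl)
  exacts [hDa, hDb, hDc, hDd, hDe, hDf]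
lemma six_case (g a b c d e f : G)
    (R1 : Commute f a) (R2 : Commute d c) (R3 : Commute e (f*b*f⁻¹))
    (R4 : Commute (a*b) c) (R5 : Commute a (b*c))
    (R6 : Commute (a*d) e) (R7 : Commute a (d*e))
    (R8 : Commute (b*d) f) (R9 : Commute b (d*f))
    (R10 : Commute (c*e) f) (R11 : Commute c (e*f))
    (hfive : (Commute g b ∧ Commute g c ∧ Commute g d ∧ Commute g e ∧ Commute g f) ∨
      (Commute g a ∧ Commute g c ∧ Commute g d ∧ Commute g e ∧ Commute g f) ∨
      (Commute g a ∧ Commute g b ∧ Commute g d ∧ Commute g e ∧ Commute g f) ∨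
      (Commute g a ∧ Commute g b ∧ Commute g c ∧ Commute g e ∧ Commute g f) ∨
      (Commute g a ∧ Commute g b ∧ Commute g c ∧ Commute g d ∧ Commute g f) ∨
      (Commute g a ∧ Commute g b ∧ Commute g c ∧ Commute g d ∧ Commute g e)) :
    ∀ x ∈ ⁅Subgroup.closure ({a,b,c,d,e,f} : Set G),
        Subgroup.closure ({a,b,c,d,e,f} : Set G)⁆, Commute g x := by
  have hD := delta_comm a b c d e f R1 R2 R3 R4 R5 R6 R7 R8 R9 R10 R11
  rcases hfive with ⟨h1,h2,h3,h4,h5⟩ | ⟨h1,h2,h3,h4,h5⟩ | ⟨h1,h2,h3,h4,h5⟩ | ⟨h1,h2,h3,h4,h5⟩ | ⟨h1,h2,h3,h4,h5⟩ | ⟨h1,h2,h3,h4,h5⟩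
  · refine five_step g ((a*b*c)*(d*e*f)) ({b, c, d, e, f} : Set G) _ ?_ hD ?_ ?_
    · intro x hx; simp only [Set.mem_insert_iff, Set.mem_singleton_iff] at hx ⊢; tauto
    · intro x hx
      simp only [Set.mem_insert_iff, Set.mem_singleton_iff] at hx
      rcases hx with h | h | h | h | h <;> rw [h]
      exacts [h1, h2, h3, h4, h5]
    have mb : b ∈ Subgroup.closure ({b, c, d, e, f} : Set G) := Subgroup.subset_closure (by simp)
    have mc : c ∈ Subgroup.closure ({b, c, d, e, f} : Set G) := Subgroup.subset_closure (by simp)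
    have md : d ∈ Subgroup.closure ({b, c, d, e, f} : Set G) := Subgroup.subset_closure (by simp)
    have me : e ∈ Subgroup.closure ({b, c, d, e, f} : Set G) := Subgroup.subset_closure (by simp)
    have mf : f ∈ Subgroup.closure ({b, c, d, e, f} : Set G) := Subgroup.subset_closure (by simp)
    intro x hx
    simp only [Set.mem_insert_iff, Set.mem_singleton_iff] at hx
    rcases hx with h | h | h | h | h | h
    · rw [h]; exact ⟨(1:G), one_mem _, (b*(c*(d*(e*f))))⁻¹, inv_mem (mul_mem (mb) (mul_mem (mc) (mul_mem (md) (mul_mem (me) (mf))))), 1, by rw [zpow_one]; group⟩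
    · rw [h]; exact ⟨b, mb, 1, one_mem _, 0, by simp⟩
    · rw [h]; exact ⟨c, mc, 1, one_mem _, 0, by simp⟩
    · rw [h]; exact ⟨d, md, 1, one_mem _, 0, by simp⟩
    · rw [h]; exact ⟨e, me, 1, one_mem _, 0, by simp⟩
    · rw [h]; exact ⟨f, mf, 1, one_mem _, 0, by simp⟩
  · refine five_step g ((a*b*c)*(d*e*f)) ({a, c, d, e, f} : Set G) _ ?_ hD ?_ ?_
    · intro x hx; simp only [Set.mem_insert_iff, Set.mem_singleton_iff] at hx ⊢; tauto
    · intro x hx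
      simp only [Set.mem_insert_iff, Set.mem_singleton_iff] at hx
      rcases hx with h | h | h | h | h <;> rw [h]
      exacts [h1, h2, h3, h4, h5]
    have ma : a ∈ Subgroup.closure ({a, c, d, e, f} : Set G) := Subgroup.subset_closure (by simp)
    have mc : c ∈ Subgroup.closure ({a, c, d, e, f} : Set G) := Subgroup.subset_closure (by simp)
    have md : d ∈ Subgroup.closure ({a, c, d, e, f} : Set G) := Subgroup.subset_closure (by simp)
    have me : e ∈ Subgroup.closure ({a, c, d, e, f} : Set G) := Subgroup.subset_closure (by simp)
    have mf : f ∈ Subgroup.closure ({a, c, d, e, f} : Set G) := Subgroup.subset_closure (by simp)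
    intro x hx
    simp only [Set.mem_insert_iff, Set.mem_singleton_iff] at hx
    rcases hx with h | h | h | h | h | h
    · rw [h]; exact ⟨a, ma, 1, one_mem _, 0, by simp⟩
    · rw [h]; exact ⟨a⁻¹, inv_mem (ma), (c*(d*(e*f)))⁻¹, inv_mem (mul_mem (mc) (mul_mem (md) (mul_mem (me) (mf)))), 1, by rw [zpow_one]; group⟩
    · rw [h]; exact ⟨c, mc, 1, one_mem _, 0, by simp⟩
    · rw [h]; exact ⟨d, md, 1, one_mem _, 0, by simp⟩
    · rw [h]; exact ⟨e, me, 1, one_mem _, 0, by simp⟩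
    · rw [h]; exact ⟨f, mf, 1, one_mem _, 0, by simp⟩
  · refine five_step g ((a*b*c)*(d*e*f)) ({a, b, d, e, f} : Set G) _ ?_ hD ?_ ?_
    · intro x hx; simp only [Set.mem_insert_iff, Set.mem_singleton_iff] at hx ⊢; tauto
    · intro x hx
      simp only [Set.mem_insert_iff, Set.mem_singleton_iff] at hx
      rcases hx with h | h | h | h | h <;> rw [h]
      exacts [h1, h2, h3, h4, h5]
    have ma : a ∈ Subgroup.closure ({a, b, d, e, f} : Set G) := Subgroup.subset_closure (by simp)
    have mb : b ∈ Subgroup.closure ({a, b, d, e, f} : Set G) := Subgroup.subset_closure (by simp)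
    have md : d ∈ Subgroup.closure ({a, b, d, e, f} : Set G) := Subgroup.subset_closure (by simp)
    have me : e ∈ Subgroup.closure ({a, b, d, e, f} : Set G) := Subgroup.subset_closure (by simp)
    have mf : f ∈ Subgroup.closure ({a, b, d, e, f} : Set G) := Subgroup.subset_closure (by simp)
    intro x hx
    simp only [Set.mem_insert_iff, Set.mem_singleton_iff] at hx
    rcases hx with h | h | h | h | h | h
    · rw [h]; exact ⟨a, ma, 1, one_mem _, 0, by simp⟩
    · rw [h]; exact ⟨b, mb, 1, one_mem _, 0, by simp⟩
    · rw [h]; exact ⟨(a*b)⁻¹, inv_mem (mul_mem (ma) (mb)), (d*(e*f))⁻¹, inv_mem (mul_mem (md) (mul_mem (me) (mf))), 1, by rw [zpow_one]; group⟩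
    · rw [h]; exact ⟨d, md, 1, one_mem _, 0, by simp⟩
    · rw [h]; exact ⟨e, me, 1, one_mem _, 0, by simp⟩
    · rw [h]; exact ⟨f, mf, 1, one_mem _, 0, by simp⟩
  · refine five_step g ((a*b*c)*(d*e*f)) ({a, b, c, e, f} : Set G) _ ?_ hD ?_ ?_
    · intro x hx; simp only [Set.mem_insert_iff, Set.mem_singleton_iff] at hx ⊢; tauto
    · intro x hx
      simp only [Set.mem_insert_iff, Set.mem_singleton_iff] at hx
      rcases hx with h | h | h | h | h <;> rw [h]
      exacts [h1, h2, h3, h4, h5]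
    have ma : a ∈ Subgroup.closure ({a, b, c, e, f} : Set G) := Subgroup.subset_closure (by simp)
    have mb : b ∈ Subgroup.closure ({a, b, c, e, f} : Set G) := Subgroup.subset_closure (by simp)
    have mc : c ∈ Subgroup.closure ({a, b, c, e, f} : Set G) := Subgroup.subset_closure (by simp)
    have me : e ∈ Subgroup.closure ({a, b, c, e, f} : Set G) := Subgroup.subset_closure (by simp)
    have mf : f ∈ Subgroup.closure ({a, b, c, e, f} : Set G) := Subgroup.subset_closure (by simp)
    intro x hx
    simp only [Set.mem_insert_iff, Set.mem_singleton_iff] at hx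
    rcases hx with h | h | h | h | h | h
    · rw [h]; exact ⟨a, ma, 1, one_mem _, 0, by simp⟩
    · rw [h]; exact ⟨b, mb, 1, one_mem _, 0, by simp⟩
    · rw [h]; exact ⟨c, mc, 1, one_mem _, 0, by simp⟩
    · rw [h]; exact ⟨(a*(b*c))⁻¹, inv_mem (mul_mem (ma) (mul_mem (mb) (mc))), (e*f)⁻¹, inv_mem (mul_mem (me) (mf)), 1, by rw [zpow_one]; group⟩
    · rw [h]; exact ⟨e, me, 1, one_mem _, 0, by simp⟩
    · rw [h]; exact ⟨f, mf, 1, one_mem _, 0, by simp⟩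
  · refine five_step g ((a*b*c)*(d*e*f)) ({a, b, c, d, f} : Set G) _ ?_ hD ?_ ?_
    · intro x hx; simp only [Set.mem_insert_iff, Set.mem_singleton_iff] at hx ⊢; tauto
    · intro x hx
      simp only [Set.mem_insert_iff, Set.mem_singleton_iff] at hx
      rcases hx with h | h | h | h | h <;> rw [h]
      exacts [h1, h2, h3, h4, h5]
    have ma : a ∈ Subgroup.closure ({a, b, c, d, f} : Set G) := Subgroup.subset_closure (by simp)
    have mb : b ∈ Subgroup.closure ({a, b, c, d, f} : Set G) := Subgroup.subset_closure (by simp)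
    have mc : c ∈ Subgroup.closure ({a, b, c, d, f} : Set G) := Subgroup.subset_closure (by simp)
    have md : d ∈ Subgroup.closure ({a, b, c, d, f} : Set G) := Subgroup.subset_closure (by simp)
    have mf : f ∈ Subgroup.closure ({a, b, c, d, f} : Set G) := Subgroup.subset_closure (by simp)
    intro x hx
    simp only [Set.mem_insert_iff, Set.mem_singleton_iff] at hx
    rcases hx with h | h | h | h | h | h
    · rw [h]; exact ⟨a, ma, 1, one_mem _, 0, by simp⟩
    · rw [h]; exact ⟨b, mb, 1, one_mem _, 0, by simp⟩
    · rw [h]; exact ⟨c, mc, 1, one_mem _, 0, by simp⟩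
    · rw [h]; exact ⟨d, md, 1, one_mem _, 0, by simp⟩
    · rw [h]; exact ⟨(a*(b*(c*d)))⁻¹, inv_mem (mul_mem (ma) (mul_mem (mb) (mul_mem (mc) (md)))), f⁻¹, inv_mem (mf), 1, by rw [zpow_one]; group⟩
    · rw [h]; exact ⟨f, mf, 1, one_mem _, 0, by simp⟩
  · refine five_step g ((a*b*c)*(d*e*f)) ({a, b, c, d, e} : Set G) _ ?_ hD ?_ ?_
    · intro x hx; simp only [Set.mem_insert_iff, Set.mem_singleton_iff] at hx ⊢; tauto
    · intro x hx
      simp only [Set.mem_insert_iff, Set.mem_singleton_iff] at hx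
      rcases hx with h | h | h | h | h <;> rw [h]
      exacts [h1, h2, h3, h4, h5]
    have ma : a ∈ Subgroup.closure ({a, b, c, d, e} : Set G) := Subgroup.subset_closure (by simp)
    have mb : b ∈ Subgroup.closure ({a, b, c, d, e} : Set G) := Subgroup.subset_closure (by simp)
    have mc : c ∈ Subgroup.closure ({a, b, c, d, e} : Set G) := Subgroup.subset_closure (by simp)
    have md : d ∈ Subgroup.closure ({a, b, c, d, e} : Set G) := Subgroup.subset_closure (by simp)
    have me : e ∈ Subgroup.closure ({a, b, c, d, e} : Set G) := Subgroup.subset_closure (by simp)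
    intro x hx
    simp only [Set.mem_insert_iff, Set.mem_singleton_iff] at hx
    rcases hx with h | h | h | h | h | h
    · rw [h]; exact ⟨a, ma, 1, one_mem _, 0, by simp⟩
    · rw [h]; exact ⟨b, mb, 1, one_mem _, 0, by simp⟩
    · rw [h]; exact ⟨c, mc, 1, one_mem _, 0, by simp⟩
    · rw [h]; exact ⟨d, md, 1, one_mem _, 0, by simp⟩
    · rw [h]; exact ⟨e, me, 1, one_mem _, 0, by simp⟩
    · rw [h]; exact ⟨(a*(b*(c*(d*e))))⁻¹, inv_mem (mul_mem (ma) (mul_mem (mb) (mul_mem (mc) (mul_mem (md) (me))))), (1:G), one_mem _, 1, by rw [zpow_one]; group⟩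

end Abstract
namespace GraphicBraid
open scoped commutatorElement

lemma presented_commute {α : Type*} {rels : Set (FreeGroup α)} {u v : FreeGroup α}
    (h : ⁅u, v⁆ ∈ rels) :
    Commute (PresentedGroup.mk rels u) (PresentedGroup.mk rels v) := by
  have h1 : PresentedGroup.mk rels ⁅u, v⁆ = 1 :=
    (QuotientGroup.eq_one_iff _).mpr (Subgroup.subset_normalClosure h)
  rw [map_commutatorElement] at h1
  exact commutatorElement_eq_one_iff_commute.mp h1

variable {n : ℕ} {Γ : SimpleGraph (Fin n)}

lemma rel_far {i j r s : Fin n} (hij : i < j) (hrs : r < s)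
    (hc : s < i ∨ (i < r ∧ s < j)) :
    Commute (PresentedGroup.of (rels := graphicRels Γ) ⟨(i,j), hij⟩)
      (PresentedGroup.of (rels := graphicRels Γ) ⟨(r,s), hrs⟩) := by
  have h : ⁅ofIdx hij, ofIdx hrs⁆ ∈ graphicRels Γ :=
    Set.mem_union_left _ (Set.mem_union_left _ (Set.mem_union_left _
      ⟨i, j, r, s, hij, hrs, hc, rfl⟩))
  exact presented_commute h

lemma rel_mid {r i s j : Fin n} (hri : r < i) (his : i < s) (hsj : s < j) :
    Commute (PresentedGroup.of (rels := graphicRels Γ) ⟨(i,j), his.trans hsj⟩)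
      (PresentedGroup.of (rels := graphicRels Γ) ⟨(s,j), hsj⟩ *
        PresentedGroup.of (rels := graphicRels Γ) ⟨(r,s), hri.trans his⟩ *
        (PresentedGroup.of (rels := graphicRels Γ) ⟨(s,j), hsj⟩)⁻¹) := by
  have h : ⁅ofIdx (his.trans hsj), ofIdx hsj * ofIdx (hri.trans his) * (ofIdx hsj)⁻¹⁆ ∈
      graphicRels Γ :=
    Set.mem_union_left _ (Set.mem_union_left _ (Set.mem_union_right _
      ⟨r, i, s, j, hri, his, hsj, rfl⟩))
  have h2 := presented_commute h
  rwa [map_mul, map_mul, map_inv] at h2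

lemma rel_tri1 {i j r : Fin n} (hij : i < j) (hjr : j < r) :
    Commute (PresentedGroup.of (rels := graphicRels Γ) ⟨(i,j), hij⟩ *
      PresentedGroup.of (rels := graphicRels Γ) ⟨(i,r), hij.trans hjr⟩)
      (PresentedGroup.of (rels := graphicRels Γ) ⟨(j,r), hjr⟩) := by
  have h : ⁅ofIdx hij * ofIdx (hij.trans hjr), ofIdx hjr⁆ ∈ graphicRels Γ :=
    Set.mem_union_left _ (Set.mem_union_right _ ⟨i, j, r, hij, hjr, Or.inl rfl⟩)
  have h2 := presented_commute h
  rwa [map_mul] at h2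

lemma rel_tri2 {i j r : Fin n} (hij : i < j) (hjr : j < r) :
    Commute (PresentedGroup.of (rels := graphicRels Γ) ⟨(i,j), hij⟩)
      (PresentedGroup.of (rels := graphicRels Γ) ⟨(i,r), hij.trans hjr⟩ *
        PresentedGroup.of (rels := graphicRels Γ) ⟨(j,r), hjr⟩) := by
  have h : ⁅ofIdx hij, ofIdx (hij.trans hjr) * ofIdx hjr⁆ ∈ graphicRels Γ :=
    Set.mem_union_left _ (Set.mem_union_right _ ⟨i, j, r, hij, hjr, Or.inr rfl⟩)
  have h2 := presented_commute h
  rwa [map_mul] at h2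

lemma pbidx_ne {i j k l : Fin n} {h : i < j} {h' : k < l}
    (hnn : ¬(i = k ∧ j = l)) : (⟨(i,j), h⟩ : PBIdx n) ≠ ⟨(k,l), h'⟩ := by
  intro heq
  apply hnn
  have h2 := congrArg Subtype.val heq
  exact ⟨congrArg Prod.fst h2, congrArg Prod.snd h2⟩

theorem five_of_six_commute {n : ℕ} (Γ : SimpleGraph (Fin n)) (X : Finset (Fin n))
    (hX : Γ.IsNClique 4 X) (g : GPB Γ)
    (hcomm : ∃ q : PBIdx n, ∀ p : PBIdx n, p.1.1 ∈ X → p.1.2 ∈ X → p ≠ q →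
      Commute g (PresentedGroup.of (rels := graphicRels Γ) p)) :
    ∀ x ∈ ⁅cliqueSubgroup Γ (X : Set (Fin n)), cliqueSubgroup Γ (X : Set (Fin n))⁆,
      Commute g x := by
  classical
  obtain ⟨q, hq⟩ := hcomm
  have hlen : (X.sort (· ≤ ·)).length = 4 := by rw [Finset.length_sort, hX.card_eq]
  obtain ⟨x1, x2, x3, x4, e⟩ : ∃ a b c d, X.sort (· ≤ ·) = [a, b, c, d] := by
    rcases hL : X.sort (· ≤ ·) with _ | ⟨a, _ | ⟨b, _ | ⟨c, _ | ⟨d, _ | ⟨e', t⟩⟩⟩⟩⟩ <;>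
      rw [hL] at hlen <;> simp at hlen
    exact ⟨a, b, c, d, rfl⟩
  have hs := (Finset.sortedLT_sort X).pairwise
  rw [e] at hs
  simp only [List.pairwise_cons, List.mem_cons, List.mem_singleton, List.not_mem_nil,
    List.Pairwise.nil, forall_eq_or_imp, forall_eq, and_true, IsEmpty.forall_iff] at hs
  have h12 : x1 < x2 := hs.1.1
  have h13 : x1 < x3 := hs.1.2.1
  have h14 : x1 < x4 := hs.1.2.2.1
  have h23 : x2 < x3 := hs.2.1.1
  have h24 : x2 < x4 := hs.2.1.2.1
  have h34 : x3 < x4 := hs.2.2.1.1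
  have hmem : ∀ y, y ∈ X ↔ y = x1 ∨ y = x2 ∨ y = x3 ∨ y = x4 := by
    intro y
    rw [← Finset.mem_sort (α := Fin n) (· ≤ ·), e]
    simp
  have hx1 : x1 ∈ X := (hmem x1).mpr (Or.inl rfl)
  have hx2 : x2 ∈ X := (hmem x2).mpr (Or.inr (Or.inl rfl))
  have hx3 : x3 ∈ X := (hmem x3).mpr (Or.inr (Or.inr (Or.inl rfl)))
  have hx4 : x4 ∈ X := (hmem x4).mpr (Or.inr (Or.inr (Or.inr rfl)))
  have R1 := rel_far (Γ := Γ) h34 h12 (Or.inl h23)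
  have R2 := rel_far (Γ := Γ) h14 h23 (Or.inr ⟨h12, h34⟩)
  have R3 := rel_mid (Γ := Γ) h12 h23 h34
  have R4 := rel_tri1 (Γ := Γ) h12 h23
  have R5 := rel_tri2 (Γ := Γ) h12 h23
  have R6 := rel_tri1 (Γ := Γ) h12 h24
  have R7 := rel_tri2 (Γ := Γ) h12 h24
  have R8 := rel_tri1 (Γ := Γ) h13 h34
  have R9 := rel_tri2 (Γ := Γ) h13 h34
  have R10 := rel_tri1 (Γ := Γ) h23 h34
  have R11 := rel_tri2 (Γ := Γ) h23 h34
  have hset : {h : GPB Γ | ∃ p : PBIdx n,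
        (p.1.1 ∈ (X : Set (Fin n)) ∧ p.1.2 ∈ (X : Set (Fin n))) ∧ h = PresentedGroup.of p} =
      ({PresentedGroup.of (rels := graphicRels Γ) ⟨(x1,x2), h12⟩,
        PresentedGroup.of (rels := graphicRels Γ) ⟨(x1,x3), h13⟩,
        PresentedGroup.of (rels := graphicRels Γ) ⟨(x2,x3), h23⟩,
        PresentedGroup.of (rels := graphicRels Γ) ⟨(x1,x4), h14⟩,
        PresentedGroup.of (rels := graphicRels Γ) ⟨(x2,x4), h24⟩,
        PresentedGroup.of (rels := graphicRels Γ) ⟨(x3,x4), h34⟩} : Set (GPB Γ)) := by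
    ext h
    simp only [Set.mem_setOf_eq, Set.mem_insert_iff, Set.mem_singleton_iff]
    constructor
    · rintro ⟨p, ⟨hu, hv⟩, rfl⟩
      rw [Finset.mem_coe, hmem] at hu hv
      have hlt := p.2
      rcases hu with hu | hu | hu | hu <;> rcases hv with hv | hv | hv | hv <;>
        first
          | exact Or.inl (congrArg _ (Subtype.ext (Prod.ext hu hv)))
          | exact Or.inr (Or.inl (congrArg _ (Subtype.ext (Prod.ext hu hv))))
          | exact Or.inr (Or.inr (Or.inl (congrArg _ (Subtype.ext (Prod.ext hu hv)))))
          | exact Or.inr (Or.inr (Or.inr (Or.inl (congrArg _ (Subtype.ext (Prod.ext hu hv))))))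
          | exact Or.inr (Or.inr (Or.inr (Or.inr (Or.inl
              (congrArg _ (Subtype.ext (Prod.ext hu hv)))))))
          | exact Or.inr (Or.inr (Or.inr (Or.inr (Or.inr
              (congrArg _ (Subtype.ext (Prod.ext hu hv)))))))
          | (rw [hu, hv] at hlt
             first
               | exact absurd hlt (lt_irrefl _)
               | exact absurd hlt (lt_asymm h12)
               | exact absurd hlt (lt_asymm h13)
               | exact absurd hlt (lt_asymm h14)
               | exact absurd hlt (lt_asymm h23)
               | exact absurd hlt (lt_asymm h24)
               | exact absurd hlt (lt_asymm h34))
    · rintro (rfl | rfl | rfl | rfl | rfl | rfl)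
      · exact ⟨⟨(x1,x2), h12⟩, ⟨Finset.mem_coe.mpr hx1, Finset.mem_coe.mpr hx2⟩, rfl⟩
      · exact ⟨⟨(x1,x3), h13⟩, ⟨Finset.mem_coe.mpr hx1, Finset.mem_coe.mpr hx3⟩, rfl⟩
      · exact ⟨⟨(x2,x3), h23⟩, ⟨Finset.mem_coe.mpr hx2, Finset.mem_coe.mpr hx3⟩, rfl⟩
      · exact ⟨⟨(x1,x4), h14⟩, ⟨Finset.mem_coe.mpr hx1, Finset.mem_coe.mpr hx4⟩, rfl⟩
      · exact ⟨⟨(x2,x4), h24⟩, ⟨Finset.mem_coe.mpr hx2, Finset.mem_coe.mpr hx4⟩, rfl⟩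
      · exact ⟨⟨(x3,x4), h34⟩, ⟨Finset.mem_coe.mpr hx3, Finset.mem_coe.mpr hx4⟩, rfl⟩
  have hKey : cliqueSubgroup Γ (X : Set (Fin n)) =
      Subgroup.closure ({PresentedGroup.of (rels := graphicRels Γ) ⟨(x1,x2), h12⟩,
        PresentedGroup.of (rels := graphicRels Γ) ⟨(x1,x3), h13⟩,
        PresentedGroup.of (rels := graphicRels Γ) ⟨(x2,x3), h23⟩,
        PresentedGroup.of (rels := graphicRels Γ) ⟨(x1,x4), h14⟩,
        PresentedGroup.of (rels := graphicRels Γ) ⟨(x2,x4), h24⟩,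
        PresentedGroup.of (rels := graphicRels Γ) ⟨(x3,x4), h34⟩} : Set (GPB Γ)) := by
    unfold cliqueSubgroup
    rw [hset]
  have hfive : (Commute g (PresentedGroup.of (rels := graphicRels Γ) ⟨(x1,x3), h13⟩) ∧ Commute g (PresentedGroup.of (rels := graphicRels Γ) ⟨(x2,x3), h23⟩) ∧ Commute g (PresentedGroup.of (rels := graphicRels Γ) ⟨(x1,x4), h14⟩) ∧ Commute g (PresentedGroup.of (rels := graphicRels Γ) ⟨(x2,x4), h24⟩) ∧ Commute g (PresentedGroup.of (rels := graphicRels Γ) ⟨(x3,x4), h34⟩)) ∨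
      (Commute g (PresentedGroup.of (rels := graphicRels Γ) ⟨(x1,x2), h12⟩) ∧ Commute g (PresentedGroup.of (rels := graphicRels Γ) ⟨(x2,x3), h23⟩) ∧ Commute g (PresentedGroup.of (rels := graphicRels Γ) ⟨(x1,x4), h14⟩) ∧ Commute g (PresentedGroup.of (rels := graphicRels Γ) ⟨(x2,x4), h24⟩) ∧ Commute g (PresentedGroup.of (rels := graphicRels Γ) ⟨(x3,x4), h34⟩)) ∨
      (Commute g (PresentedGroup.of (rels := graphicRels Γ) ⟨(x1,x2), h12⟩) ∧ Commute g (PresentedGroup.of (rels := graphicRels Γ) ⟨(x1,x3), h13⟩) ∧ Commute g (PresentedGroup.of (rels := graphicRels Γ) ⟨(x1,x4), h14⟩) ∧ Commute g (PresentedGroup.of (rels := graphicRels Γ) ⟨(x2,x4), h24⟩) ∧ Commute g (PresentedGroup.of (rels := graphicRels Γ) ⟨(x3,x4), h34⟩)) ∨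
      (Commute g (PresentedGroup.of (rels := graphicRels Γ) ⟨(x1,x2), h12⟩) ∧ Commute g (PresentedGroup.of (rels := graphicRels Γ) ⟨(x1,x3), h13⟩) ∧ Commute g (PresentedGroup.of (rels := graphicRels Γ) ⟨(x2,x3), h23⟩) ∧ Commute g (PresentedGroup.of (rels := graphicRels Γ) ⟨(x2,x4), h24⟩) ∧ Commute g (PresentedGroup.of (rels := graphicRels Γ) ⟨(x3,x4), h34⟩)) ∨
      (Commute g (PresentedGroup.of (rels := graphicRels Γ) ⟨(x1,x2), h12⟩) ∧ Commute g (PresentedGroup.of (rels := graphicRels Γ) ⟨(x1,x3), h13⟩) ∧ Commute g (PresentedGroup.of (rels := graphicRels Γ) ⟨(x2,x3), h23⟩) ∧ Commute g (PresentedGroup.of (rels := graphicRels Γ) ⟨(x1,x4), h14⟩) ∧ Commute g (PresentedGroup.of (rels := graphicRels Γ) ⟨(x3,x4), h34⟩)) ∨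
      (Commute g (PresentedGroup.of (rels := graphicRels Γ) ⟨(x1,x2), h12⟩) ∧ Commute g (PresentedGroup.of (rels := graphicRels Γ) ⟨(x1,x3), h13⟩) ∧ Commute g (PresentedGroup.of (rels := graphicRels Γ) ⟨(x2,x3), h23⟩) ∧ Commute g (PresentedGroup.of (rels := graphicRels Γ) ⟨(x1,x4), h14⟩) ∧ Commute g (PresentedGroup.of (rels := graphicRels Γ) ⟨(x2,x4), h24⟩)) := by
    by_cases hq0 : q = (⟨(x1,x2), h12⟩ : PBIdx n)
    · exact Or.inl (⟨hq (⟨(x1,x3), h13⟩ : PBIdx n) hx1 hx3 (by rw [hq0]; exact pbidx_ne (fun hh => (ne_of_gt h23) hh.2)),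
        hq (⟨(x2,x3), h23⟩ : PBIdx n) hx2 hx3 (by rw [hq0]; exact pbidx_ne (fun hh => (ne_of_gt h12) hh.1)),
        hq (⟨(x1,x4), h14⟩ : PBIdx n) hx1 hx4 (by rw [hq0]; exact pbidx_ne (fun hh => (ne_of_gt h24) hh.2)),
        hq (⟨(x2,x4), h24⟩ : PBIdx n) hx2 hx4 (by rw [hq0]; exact pbidx_ne (fun hh => (ne_of_gt h12) hh.1)),
        hq (⟨(x3,x4), h34⟩ : PBIdx n) hx3 hx4 (by rw [hq0]; exact pbidx_ne (fun hh => (ne_of_gt h13) hh.1))⟩)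
    by_cases hq1 : q = (⟨(x1,x3), h13⟩ : PBIdx n)
    · exact Or.inr (Or.inl (⟨hq (⟨(x1,x2), h12⟩ : PBIdx n) hx1 hx2 (by rw [hq1]; exact pbidx_ne (fun hh => (ne_of_lt h23) hh.2)),
        hq (⟨(x2,x3), h23⟩ : PBIdx n) hx2 hx3 (by rw [hq1]; exact pbidx_ne (fun hh => (ne_of_gt h12) hh.1)),
        hq (⟨(x1,x4), h14⟩ : PBIdx n) hx1 hx4 (by rw [hq1]; exact pbidx_ne (fun hh => (ne_of_gt h34) hh.2)),
        hq (⟨(x2,x4), h24⟩ : PBIdx n) hx2 hx4 (by rw [hq1]; exact pbidx_ne (fun hh => (ne_of_gt h12) hh.1)),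
        hq (⟨(x3,x4), h34⟩ : PBIdx n) hx3 hx4 (by rw [hq1]; exact pbidx_ne (fun hh => (ne_of_gt h13) hh.1))⟩))
    by_cases hq2 : q = (⟨(x2,x3), h23⟩ : PBIdx n)
    · exact Or.inr (Or.inr (Or.inl (⟨hq (⟨(x1,x2), h12⟩ : PBIdx n) hx1 hx2 (by rw [hq2]; exact pbidx_ne (fun hh => (ne_of_lt h12) hh.1)),
        hq (⟨(x1,x3), h13⟩ : PBIdx n) hx1 hx3 (by rw [hq2]; exact pbidx_ne (fun hh => (ne_of_lt h12) hh.1)),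
        hq (⟨(x1,x4), h14⟩ : PBIdx n) hx1 hx4 (by rw [hq2]; exact pbidx_ne (fun hh => (ne_of_lt h12) hh.1)),
        hq (⟨(x2,x4), h24⟩ : PBIdx n) hx2 hx4 (by rw [hq2]; exact pbidx_ne (fun hh => (ne_of_gt h34) hh.2)),
        hq (⟨(x3,x4), h34⟩ : PBIdx n) hx3 hx4 (by rw [hq2]; exact pbidx_ne (fun hh => (ne_of_gt h23) hh.1))⟩)))
    by_cases hq3 : q = (⟨(x1,x4), h14⟩ : PBIdx n)
    · exact Or.inr (Or.inr (Or.inr (Or.inl (⟨hq (⟨(x1,x2), h12⟩ : PBIdx n) hx1 hx2 (by rw [hq3]; exact pbidx_ne (fun hh => (ne_of_lt h24) hh.2)),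
        hq (⟨(x1,x3), h13⟩ : PBIdx n) hx1 hx3 (by rw [hq3]; exact pbidx_ne (fun hh => (ne_of_lt h34) hh.2)),
        hq (⟨(x2,x3), h23⟩ : PBIdx n) hx2 hx3 (by rw [hq3]; exact pbidx_ne (fun hh => (ne_of_gt h12) hh.1)),
        hq (⟨(x2,x4), h24⟩ : PBIdx n) hx2 hx4 (by rw [hq3]; exact pbidx_ne (fun hh => (ne_of_gt h12) hh.1)),
        hq (⟨(x3,x4), h34⟩ : PBIdx n) hx3 hx4 (by rw [hq3]; exact pbidx_ne (fun hh => (ne_of_gt h13) hh.1))⟩))))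
    by_cases hq4 : q = (⟨(x2,x4), h24⟩ : PBIdx n)
    · exact Or.inr (Or.inr (Or.inr (Or.inr (Or.inl (⟨hq (⟨(x1,x2), h12⟩ : PBIdx n) hx1 hx2 (by rw [hq4]; exact pbidx_ne (fun hh => (ne_of_lt h12) hh.1)),
        hq (⟨(x1,x3), h13⟩ : PBIdx n) hx1 hx3 (by rw [hq4]; exact pbidx_ne (fun hh => (ne_of_lt h12) hh.1)),
        hq (⟨(x2,x3), h23⟩ : PBIdx n) hx2 hx3 (by rw [hq4]; exact pbidx_ne (fun hh => (ne_of_lt h34) hh.2)),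
        hq (⟨(x1,x4), h14⟩ : PBIdx n) hx1 hx4 (by rw [hq4]; exact pbidx_ne (fun hh => (ne_of_lt h12) hh.1)),
        hq (⟨(x3,x4), h34⟩ : PBIdx n) hx3 hx4 (by rw [hq4]; exact pbidx_ne (fun hh => (ne_of_gt h23) hh.1))⟩)))))
    by_cases hq5 : q = (⟨(x3,x4), h34⟩ : PBIdx n)
    · exact Or.inr (Or.inr (Or.inr (Or.inr (Or.inr (⟨hq (⟨(x1,x2), h12⟩ : PBIdx n) hx1 hx2 (by rw [hq5]; exact pbidx_ne (fun hh => (ne_of_lt h13) hh.1)),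
        hq (⟨(x1,x3), h13⟩ : PBIdx n) hx1 hx3 (by rw [hq5]; exact pbidx_ne (fun hh => (ne_of_lt h13) hh.1)),
        hq (⟨(x2,x3), h23⟩ : PBIdx n) hx2 hx3 (by rw [hq5]; exact pbidx_ne (fun hh => (ne_of_lt h23) hh.1)),
        hq (⟨(x1,x4), h14⟩ : PBIdx n) hx1 hx4 (by rw [hq5]; exact pbidx_ne (fun hh => (ne_of_lt h13) hh.1)),
        hq (⟨(x2,x4), h24⟩ : PBIdx n) hx2 hx4 (by rw [hq5]; exact pbidx_ne (fun hh => (ne_of_lt h23) hh.1))⟩)))))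
    exact Or.inl (⟨hq (⟨(x1,x3), h13⟩ : PBIdx n) hx1 hx3 (fun hh => hq1 hh.symm),
      hq (⟨(x2,x3), h23⟩ : PBIdx n) hx2 hx3 (fun hh => hq2 hh.symm),
      hq (⟨(x1,x4), h14⟩ : PBIdx n) hx1 hx4 (fun hh => hq3 hh.symm),
      hq (⟨(x2,x4), h24⟩ : PBIdx n) hx2 hx4 (fun hh => hq4 hh.symm),
      hq (⟨(x3,x4), h34⟩ : PBIdx n) hx3 hx4 (fun hh => hq5 hh.symm)⟩)
  rw [hKey]
  exact six_case g _ _ _ _ _ _ R1 R2 R3 R4 R5 R6 R7 R8 R9 R10 R11 hfive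

end GraphicBraid
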